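/- Let L be a finite-dimensional complex Lie algebra with a nondegenerate symmetric ℂ-bilinear form B, let g be a real slice of (L,B), and let θ₁, θ₂ : g → g be two Cartan involutions of Lie algebras of the restriction of B to g. Then there exists an ℝ-linear map ψ : g → g which is a Lie algebra automorphism of g, satisfies B(ψ(x), ψ(y)) = B(x,y) for all x,y ∈ g, lies in the identity component of the automorphism group Aut(g) and in the identity component of the orthogonal group of B|g (both viewed as topological subgroups of GL(g)), and satisfies ψ ∘ θ₁ ∘ ψ⁻¹ = θ₂. -/

import Mathlib

/-!
Setup: a finite-dimensional complex Lie algebra `L` with a nondegenerate symmetric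
`ℂ`-bilinear form `B` (a "holomorphic inner product"), viewed also as a real Lie algebra.
-/

variable {L : Type*} [LieRing L] [LieAlgebra ℂ L]

/-- A complex Lie algebra is in particular a real Lie algebra. -/
noncomputable instance instLieAlgebraRealOfComplex : LieAlgebra ℝ L :=
  { (inferInstance : Module ℝ L) with
    lie_smul := fun t x y => by
      rw [show t • y = (t : ℂ) • y from rfl, lie_smul,
        show (t : ℂ) • ⁅x, y⁆ = t • ⁅x, y⁆ from rfl] }

/-- `g` is a real form of the complex Lie algebra `L`:
`g ∩ i • g = {0}` and `g + i • g = L`. -/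
def IsRealForm (g : LieSubalgebra ℝ L) : Prop :=
  (∀ x ∈ g, ∀ y ∈ g, x = Complex.I • y → x = 0) ∧
  (∀ z : L, ∃ x ∈ g, ∃ y ∈ g, z = x + Complex.I • y)

/-- `g` is a real slice of `(L, B)`: a real form of `L` on which `B` is real-valued. -/
def IsRealSlice (B : LinearMap.BilinForm ℂ L) (g : LieSubalgebra ℝ L) : Prop :=
  IsRealForm g ∧ ∀ x ∈ g, ∀ y ∈ g, (B x y).im = 0

/-- A compact real form of `(L, B)`: a real slice on which `B` is positive definite. -/
def IsCompactRealForm (B : LinearMap.BilinForm ℂ L) (u : LieSubalgebra ℝ L) : Prop :=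
  IsRealSlice B u ∧ ∀ x ∈ u, x ≠ 0 → 0 < (B x x).re

/-- A Cartan involution of the metric `B|g`: an `ℝ`-linear involution `θ` of `g` such that
`(x, y) ↦ B x (θ y)` is a positive-definite (real-valued, symmetric) inner product on `g`. -/
def IsCartanInvolutionOfMetric (B : LinearMap.BilinForm ℂ L) (g : LieSubalgebra ℝ L)
    (θ : ↥g →ₗ[ℝ] ↥g) : Prop :=
  (∀ x, θ (θ x) = x) ∧
  (∀ x y : ↥g, B (θ x : L) (y : L) = B (x : L) (θ y : L)) ∧
  (∀ x : ↥g, x ≠ 0 → 0 < (B (x : L) (θ x : L)).re)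

/-- A Cartan involution of Lie algebras of the metric `B|g`: a Cartan involution of the
metric which is moreover a Lie algebra automorphism of `g`. -/
def IsCartanInvolutionOfLieAlgebras (B : LinearMap.BilinForm ℂ L) (g : LieSubalgebra ℝ L)
    (θ : ↥g →ₗ[ℝ] ↥g) : Prop :=
  IsCartanInvolutionOfMetric B g θ ∧ ∀ x y : ↥g, θ ⁅x, y⁆ = ⁅θ x, θ y⁆

/-- The (matrix-entry) topology on the group of linear automorphisms of a
finite-dimensional real vector space, induced by the entries of the matrix in a fixed
basis; this is the standard topology of `GL(V)`. -/
noncomputable def autTopology (V : Type*) [AddCommGroup V] [Module ℝ V]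
    [FiniteDimensional ℝ V] : TopologicalSpace (V ≃ₗ[ℝ] V) :=
  TopologicalSpace.induced
    (fun e i j => (Module.finBasis ℝ V).repr (e (Module.finBasis ℝ V j)) i)
    inferInstance

/-- `ψ` lies in the identity component of the subgroup `S` of `GL(V)` (with its subspace
topology). -/
def MemIdentityComponent (V : Type*) [AddCommGroup V] [Module ℝ V] [FiniteDimensional ℝ V]
    (S : Subgroup (V ≃ₗ[ℝ] V)) (ψ : V ≃ₗ[ℝ] V) : Prop :=
  letI := autTopology V
  ∃ h : ψ ∈ S, (⟨ψ, h⟩ : S) ∈ connectedComponent (1 : S)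

/-- The subgroup of `GL(V)` preserving a given (not necessarily real-valued) pairing `b`. -/
def isometrySubgroup {V : Type*} [AddCommGroup V] [Module ℝ V] {α : Type*}
    (b : V → V → α) : Subgroup (V ≃ₗ[ℝ] V) where
  carrier := {A | ∀ x y : V, b (A x) (A y) = b x y}
  one_mem' := fun _ _ => rfl
  mul_mem' := fun {a c} ha hc x y => (ha (c x) (c y)).trans (hc x y)
  inv_mem' := by
    intro a ha x y
    have h1 : a⁻¹ = a.symm := rfl
    rw [h1]
    conv_rhs => rw [← a.apply_symm_apply x, ← a.apply_symm_apply y]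
    exact (ha (a.symm x) (a.symm y)).symm ▸ rfl

/-- The automorphism group of a real Lie algebra, as a subgroup of `GL(g)`. -/
def lieAutSubgroup (g : Type*) [LieRing g] [LieAlgebra ℝ g] :
    Subgroup (g ≃ₗ[ℝ] g) where
  carrier := {A | ∀ x y : g, A ⁅x, y⁆ = ⁅A x, A y⁆}
  one_mem' := fun _ _ => rfl
  mul_mem' := fun {a c} ha hc x y => by
    show a (c ⁅x, y⁆) = ⁅a (c x), a (c y)⁆
    rw [hc, ha]
  inv_mem' := by
    intro a ha x y
    have h1 : a⁻¹ = a.symm := rfl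
    rw [h1]
    apply a.injective
    rw [ha, a.apply_symm_apply, a.apply_symm_apply, a.apply_symm_apply]


open Real
section Aux

variable {V : Type*} [AddCommGroup V] [Module ℝ V] {n : ℕ}

/-- Fractional power of a diagonalizable operator, via a fixed eigenbasis. -/
noncomputable def phiMap (b : Module.Basis (Fin n) ℝ V) (lam : Fin n → ℝ) (s : ℝ) : V →ₗ[ℝ] V :=
  b.constr ℝ fun i => (lam i ^ s) • b i

lemma phiMap_basis (b : Module.Basis (Fin n) ℝ V) (lam : Fin n → ℝ) (s : ℝ) (i : Fin n) :
    phiMap b lam s (b i) = (lam i ^ s) • b i := by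
  simp [phiMap, Module.Basis.constr_basis]

lemma diag_repr (b : Module.Basis (Fin n) ℝ V) (S : V →ₗ[ℝ] V) (d : Fin n → ℝ)
    (hS : ∀ i, S (b i) = d i • b i) (v : V) (k : Fin n) :
    b.repr (S v) k = d k * b.repr v k := by
  have h : ((Finsupp.lapply k : (Fin n →₀ ℝ) →ₗ[ℝ] ℝ).comp
        ((b.repr : V ≃ₗ[ℝ] (Fin n →₀ ℝ)).toLinearMap.comp S)) =
      d k • ((Finsupp.lapply k : (Fin n →₀ ℝ) →ₗ[ℝ] ℝ).comp
        (b.repr : V ≃ₗ[ℝ] (Fin n →₀ ℝ)).toLinearMap) := by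
    apply b.ext
    intro i
    simp only [LinearMap.comp_apply, LinearMap.smul_apply, LinearEquiv.coe_coe, hS i,
      map_smul, Finsupp.lapply_apply, Module.Basis.repr_self, Finsupp.smul_apply, smul_eq_mul,
      Finsupp.single_apply]
    by_cases h : i = k <;> simp [h]
  have := LinearMap.congr_fun h v
  simpa using this

lemma phiMap_eig (b : Module.Basis (Fin n) ℝ V) (lam : Fin n → ℝ) (T : V →ₗ[ℝ] V)
    (hT : ∀ i, T (b i) = lam i • b i) (s μ : ℝ) (v : V) (hv : T v = μ • v) :
    phiMap b lam s v = (μ ^ s) • v := by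
  apply b.repr.injective
  ext k
  rw [diag_repr b _ (fun i => lam i ^ s) (fun i => phiMap_basis b lam s i) v k,
    map_smul, Finsupp.smul_apply, smul_eq_mul]
  by_cases hc : b.repr v k = 0
  · simp [hc]
  · have h1 : lam k * b.repr v k = μ * b.repr v k := by
      have h2 := diag_repr b T lam hT v k
      rw [hv, map_smul, Finsupp.smul_apply, smul_eq_mul] at h2
      linarith [h2]
    have : lam k = μ := mul_right_cancel₀ hc h1
    rw [this]

lemma phiMap_apply (b : Module.Basis (Fin n) ℝ V) (lam : Fin n → ℝ) (s : ℝ) (v : V) :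
    phiMap b lam s v = ∑ k, ((lam k ^ s) * b.repr v k) • b k := by
  conv_lhs => rw [← b.sum_repr v]
  rw [map_sum]
  refine Finset.sum_congr rfl fun k _ => ?_
  rw [map_smul, phiMap_basis, smul_smul, mul_comm]

end Aux

set_option maxHeartbeats 2000000 in
/-- Two Cartan involutions of Lie algebras `θ₁, θ₂` of the metric `B|g` on
a real slice `g` of `(L, B)` are conjugate by a Lie algebra automorphism `ψ` of `g`
preserving `B|g`, lying both in the identity component of `Aut(g)` and in the identity
component of the orthogonal group `O(B|g)` (as topological subgroups of `GL(g)`). -/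
theorem cartanInvolutionsOfLieAlgebras_conjugate [FiniteDimensional ℂ L]
    (B : LinearMap.BilinForm ℂ L) (hBsymm : ∀ x y : L, B x y = B y x)
    (hBnd : B.Nondegenerate) (g : LieSubalgebra ℝ L) (hg : IsRealSlice B g)
    (θ₁ θ₂ : ↥g →ₗ[ℝ] ↥g) (h₁ : IsCartanInvolutionOfLieAlgebras B g θ₁)
    (h₂ : IsCartanInvolutionOfLieAlgebras B g θ₂) :
    ∃ ψ : ↥g ≃ₗ[ℝ] ↥g,
      (∀ x y : ↥g, ψ ⁅x, y⁆ = ⁅ψ x, ψ y⁆) ∧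
      (∀ x y : ↥g, B (ψ x : L) (ψ y : L) = B (x : L) (y : L)) ∧
      MemIdentityComponent ↥g (lieAutSubgroup ↥g) ψ ∧
      MemIdentityComponent ↥g (isometrySubgroup fun x y : ↥g => B (x : L) (y : L)) ψ ∧
      ∀ x : ↥g, ψ (θ₁ (ψ.symm x)) = θ₂ x := by
  classical
  obtain ⟨⟨h1i, h1s, h1p⟩, h1lie⟩ := h₁
  obtain ⟨⟨h2i, h2s, h2p⟩, h2lie⟩ := h₂
  have hcoe : ∀ (r : ℝ) (x : ↥g), ((r • x : ↥g) : L) = (r : ℂ) • (x : L) := by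
    intro r x
    rw [Complex.coe_smul]
    rfl
  have hBsmul₁ : ∀ (r : ℝ) (x y : ↥g), B ((r • x : ↥g) : L) (y : L) = (r : ℂ) * B (x : L) (y : L) := by
    intro r x y
    rw [hcoe, map_smul, LinearMap.smul_apply, smul_eq_mul]
  have hBsmul₂ : ∀ (r : ℝ) (x y : ↥g), B (x : L) ((r • y : ↥g) : L) = (r : ℂ) * B (x : L) (y : L) := by
    intro r x y
    rw [hBsymm, hBsmul₁, hBsymm (y : L)]
  set T : ↥g →ₗ[ℝ] ↥g := θ₁ ∘ₗ θ₂ with hTdef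
  have hTapp : ∀ x, T x = θ₁ (θ₂ x) := fun x => rfl
  have hθ₂ne : ∀ x : ↥g, x ≠ 0 → θ₂ x ≠ 0 := by
    intro x hx h
    apply hx
    have h' := congrArg θ₂ h
    rwa [h2i, map_zero] at h'
  obtain ⟨b, lam, hlam, hTb⟩ :
      ∃ (b : Module.Basis (Fin (Module.finrank ℝ ↥g)) ℝ ↥g) (lam : Fin (Module.finrank ℝ ↥g) → ℝ),
        (∀ i, 0 < lam i) ∧ ∀ i, T (b i) = lam i • b i := by
    letI core : InnerProductSpace.Core ℝ ↥g :=
    { inner := fun x y => (B (x : L) ((θ₂ y : ↥g) : L)).re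
      conj_inner_symm := by
        intro x y
        simp only [starRingEnd_apply, star_trivial, RCLike.star_def]
        show (B (y : L) ((θ₂ x : ↥g) : L)).re = (B (x : L) ((θ₂ y : ↥g) : L)).re
        rw [hBsymm, ← h2s]
      re_inner_nonneg := by
        intro x
        show (0:ℝ) ≤ (B (x : L) ((θ₂ x : ↥g) : L)).re
        by_cases hx : x = 0
        · simp [hx]
        · exact le_of_lt (h2p x hx)
      add_left := by
        intro x y z
        show (B ((x + y : ↥g) : L) _).re = _
        have hadd : ((x + y : ↥g) : L) = (x : L) + (y : L) := rfl
        rw [hadd, map_add, LinearMap.add_apply, Complex.add_re]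
      smul_left := by
        intro x y r
        show (B ((r • x : ↥g) : L) _).re = r * (B (x : L) _).re
        rw [hBsmul₁, Complex.mul_re, Complex.ofReal_re, Complex.ofReal_im]
        ring
      definite := by
        intro x hx
        by_contra h
        exact absurd hx (ne_of_gt (h2p x h)) }
    letI : NormedAddCommGroup ↥g := core.toNormedAddCommGroup
    letI : InnerProductSpace ℝ ↥g := InnerProductSpace.ofCore core.toCore
    have hTsym : T.IsSymmetric := by
      intro x y
      show (B ((T x : ↥g) : L) ((θ₂ y : ↥g) : L)).re = (B (x : L) ((θ₂ (T y) : ↥g) : L)).re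
      rw [hTapp, hTapp, h1s (θ₂ x) (θ₂ y), h2s x (θ₁ (θ₂ y))]
    set ob := hTsym.eigenvectorBasis rfl with hob
    set lam : Fin (Module.finrank ℝ ↥g) → ℝ := hTsym.eigenvalues rfl with hlamdef
    set b : Module.Basis (Fin (Module.finrank ℝ ↥g)) ℝ ↥g := ob.toBasis with hbdef
    have hTb : ∀ i, T (b i) = lam i • b i := by
      intro i
      have h0 : b i = ob i := by
        rw [hbdef, OrthonormalBasis.coe_toBasis]
      rw [h0]
      exact_mod_cast hTsym.apply_eigenvectorBasis rfl i
    have hbne : ∀ i, b i ≠ 0 := fun i => b.ne_zero i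
    have hpos : ∀ x : ↥g, x ≠ 0 → 0 < (B (x : L) ((θ₂ x : ↥g) : L)).re := h2p
    have hlam : ∀ i, 0 < lam i := by
      intro i
      have h1 : 0 < (B ((T (b i) : ↥g) : L) ((θ₂ (b i) : ↥g) : L)).re := by
        rw [hTapp]
        have := h1p (θ₂ (b i)) (hθ₂ne _ (hbne i))
        rw [hBsymm]
        exact this
      rw [hTb i, hBsmul₁] at h1
      have h2 := hpos (b i) (hbne i)
      rw [Complex.mul_re, Complex.ofReal_re, Complex.ofReal_im] at h1
      simp only [zero_mul, sub_zero] at h1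
      rcases mul_pos_iff.1 h1 with ⟨ha, _⟩ | ⟨_, hb⟩
      · exact ha
      · linarith
    exact ⟨b, lam, hlam, hTb⟩
  have hT_lie : ∀ x y : ↥g, T ⁅x, y⁆ = ⁅T x, T y⁆ := by
    intro x y
    rw [hTapp, hTapp, hTapp, h2lie, h1lie]
  have hT_B : ∀ x y : ↥g, B ((T x : ↥g) : L) ((T y : ↥g) : L) = B (x : L) (y : L) := by
    intro x y
    rw [hTapp, hTapp, h1s (θ₂ x) (θ₁ (θ₂ y)), h1i, h2s x (θ₂ y), h2i]
  set Φ : ℝ → (↥g →ₗ[ℝ] ↥g) := fun s => phiMap b lam s with hΦdef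
  have hΦb : ∀ s i, Φ s (b i) = lam i ^ s • b i := fun s i => phiMap_basis b lam s i
  have hΦeig : ∀ (s μ : ℝ) (v : ↥g), T v = μ • v → Φ s v = μ ^ s • v :=
    fun s μ v hv => phiMap_eig b lam T hTb s μ v hv
  have hΦ_add : ∀ (s t : ℝ) (v : ↥g), Φ s (Φ t v) = Φ (s + t) v := by
    intro s t v
    have h : (Φ s) ∘ₗ (Φ t) = Φ (s + t) := by
      apply b.ext
      intro i
      rw [LinearMap.comp_apply, hΦb, map_smul, hΦb, smul_smul, hΦb,
        ← Real.rpow_add (hlam i), add_comm t s]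
    exact LinearMap.congr_fun h v
  have hΦ_zero : ∀ v : ↥g, Φ 0 v = v := by
    intro v
    have h : Φ 0 = LinearMap.id := by
      apply b.ext
      intro i
      rw [hΦb, Real.rpow_zero, one_smul, LinearMap.id_apply]
    rw [h, LinearMap.id_apply]
  have hΦ_one : ∀ v : ↥g, Φ 1 v = T v := by
    intro v
    have h : Φ 1 = T := by
      apply b.ext
      intro i
      rw [hΦb, Real.rpow_one, hTb]
    rw [h]
  have pairLie : ∀ (s : ℝ) (i j : Fin (Module.finrank ℝ ↥g)), Φ s ⁅b i, b j⁆ = ⁅Φ s (b i), Φ s (b j)⁆ := by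
    intro s i j
    have h1 : T ⁅b i, b j⁆ = (lam i * lam j) • ⁅b i, b j⁆ := by
      rw [hT_lie, hTb, hTb, smul_lie, lie_smul, smul_smul]
    rw [hΦeig s _ _ h1, hΦb, hΦb, smul_lie, lie_smul, smul_smul,
      Real.mul_rpow (hlam i).le (hlam j).le]
  have hΦ_lie : ∀ (s : ℝ) (x y : ↥g), Φ s ⁅x, y⁆ = ⁅Φ s x, Φ s y⁆ := by
    intro s
    let f₁ : ↥g →ₗ[ℝ] ↥g →ₗ[ℝ] ↥g := LinearMap.mk₂ ℝ (fun x y => Φ s ⁅x, y⁆)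
      (fun x x' y => by simp only [add_lie, map_add])
      (fun r x y => by simp only [smul_lie, map_smul])
      (fun x y y' => by simp only [lie_add, map_add])
      (fun r x y => by simp only [lie_smul, map_smul])
    let f₂ : ↥g →ₗ[ℝ] ↥g →ₗ[ℝ] ↥g := LinearMap.mk₂ ℝ (fun x y => ⁅Φ s x, Φ s y⁆)
      (fun x x' y => by simp only [map_add, add_lie])
      (fun r x y => by simp only [map_smul, smul_lie])
      (fun x y y' => by simp only [map_add, lie_add])
      (fun r x y => by simp only [map_smul, lie_smul])
    have h : f₁ = f₂ := LinearMap.ext_basis b b (fun i j => pairLie s i j)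
    intro x y
    exact LinearMap.congr_fun (LinearMap.congr_fun h x) y
  have pairB : ∀ (s : ℝ) (i j : Fin (Module.finrank ℝ ↥g)),
      B ((Φ s (b i) : ↥g) : L) ((Φ s (b j) : ↥g) : L) = B ((b i : ↥g) : L) ((b j : ↥g) : L) := by
    intro s i j
    have h1 := hT_B (b i) (b j)
    rw [hTb, hTb, hBsmul₁, hBsmul₂] at h1
    rw [hΦb, hΦb, hBsmul₁, hBsmul₂]
    by_cases hz : B ((b i : ↥g) : L) ((b j : ↥g) : L) = 0
    · rw [hz]; ring
    · have h3 : ((lam i : ℂ) * (lam j : ℂ) - 1) * B ((b i : ↥g) : L) ((b j : ↥g) : L) = 0 := by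
        linear_combination h1
      have h2 : (lam i : ℂ) * (lam j : ℂ) = 1 := by
        rcases mul_eq_zero.mp h3 with h4 | h4
        · exact sub_eq_zero.mp h4
        · exact absurd h4 hz
      have h5 : lam i * lam j = 1 := by exact_mod_cast h2
      have h6 : (lam i ^ s) * (lam j ^ s) = 1 := by
        rw [← Real.mul_rpow (hlam i).le (hlam j).le, h5, Real.one_rpow]
      have h7 : ((lam i ^ s : ℝ) : ℂ) * ((lam j ^ s : ℝ) : ℂ) = 1 := by
        exact_mod_cast congrArg (fun r : ℝ => (r : ℂ)) h6
      calc ((lam i ^ s : ℝ) : ℂ) * (((lam j ^ s : ℝ) : ℂ) * B ((b i : ↥g) : L) ((b j : ↥g) : L))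
          = (((lam i ^ s : ℝ) : ℂ) * ((lam j ^ s : ℝ) : ℂ)) * B ((b i : ↥g) : L) ((b j : ↥g) : L) := by
            ring
        _ = B ((b i : ↥g) : L) ((b j : ↥g) : L) := by rw [h7, one_mul]
  have hBadd₁ : ∀ x x' y : ↥g, B ((x + x' : ↥g) : L) (y : L) = B (x:L) (y:L) + B (x':L) (y:L) := by
    intro x x' y
    have h : ((x + x' : ↥g) : L) = (x:L) + (x':L) := rfl
    rw [h, map_add, LinearMap.add_apply]
  have hBadd₂ : ∀ x y y' : ↥g, B (x : L) ((y + y' : ↥g) : L) = B (x:L) (y:L) + B (x:L) (y':L) := by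
    intro x y y'
    have h : ((y + y' : ↥g) : L) = (y:L) + (y':L) := rfl
    rw [h, map_add]
  have hΦ_B : ∀ (s : ℝ) (x y : ↥g),
      B ((Φ s x : ↥g) : L) ((Φ s y : ↥g) : L) = B (x : L) (y : L) := by
    intro s
    let f₁ : ↥g →ₗ[ℝ] ↥g →ₗ[ℝ] ℂ := LinearMap.mk₂ ℝ
      (fun x y : ↥g => B ((Φ s x : ↥g) : L) ((Φ s y : ↥g) : L))
      (fun x x' y => by simp only [map_add, hBadd₁])
      (fun r x y => by simp only [map_smul, hBsmul₁, Complex.real_smul])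
      (fun x y y' => by simp only [map_add, hBadd₂])
      (fun r x y => by simp only [map_smul, hBsmul₂, Complex.real_smul])
    let f₂ : ↥g →ₗ[ℝ] ↥g →ₗ[ℝ] ℂ := LinearMap.mk₂ ℝ
      (fun x y : ↥g => B (x : L) (y : L))
      (fun x x' y => by simp only [hBadd₁])
      (fun r x y => by simp only [hBsmul₁, Complex.real_smul])
      (fun x y y' => by simp only [hBadd₂])
      (fun r x y => by simp only [hBsmul₂, Complex.real_smul])
    have h : f₁ = f₂ := LinearMap.ext_basis b b (fun i j => pairB s i j)
    intro x y
    exact LinearMap.congr_fun (LinearMap.congr_fun h x) y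
  have hθ₂θ₁b : ∀ i, θ₂ (θ₁ (b i)) = (lam i)⁻¹ • b i := by
    intro i
    have h1 : θ₂ (θ₁ (T (b i))) = b i := by rw [hTapp, h1i, h2i]
    rw [hTb, map_smul, map_smul] at h1
    have h2 := congrArg (fun v : ↥g => (lam i)⁻¹ • v) h1
    simpa [smul_smul, inv_mul_cancel₀ (hlam i).ne'] using h2
  have hTθ₁b : ∀ i, T (θ₁ (b i)) = (lam i)⁻¹ • θ₁ (b i) := by
    intro i
    rw [hTapp, hθ₂θ₁b, map_smul]
  have hΦθ : ∀ s : ℝ, (Φ s) ∘ₗ θ₁ = θ₁ ∘ₗ (Φ (-s)) := by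
    intro s
    apply b.ext
    intro i
    rw [LinearMap.comp_apply, LinearMap.comp_apply, hΦeig s _ _ (hTθ₁b i), hΦb, map_smul,
      Real.inv_rpow (hlam i).le, ← Real.rpow_neg (hlam i).le]
  set F : ℝ → (↥g ≃ₗ[ℝ] ↥g) := fun t =>
    LinearEquiv.ofLinear (Φ (-(t / 2))) (Φ (t / 2))
      (by
        apply LinearMap.ext
        intro v
        rw [LinearMap.comp_apply, hΦ_add]
        have he : (-(t / 2) + t / 2 : ℝ) = 0 := by ring
        rw [he]
        exact hΦ_zero v)
      (by
        apply LinearMap.ext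
        intro v
        rw [LinearMap.comp_apply, hΦ_add]
        have he : (t / 2 + -(t / 2) : ℝ) = 0 := by ring
        rw [he]
        exact hΦ_zero v)
    with hFdef
  have hFapply : ∀ (t : ℝ) (x : ↥g), F t x = Φ (-(t / 2)) x := fun t x => rfl
  have hFmemLie : ∀ t : ℝ, F t ∈ lieAutSubgroup ↥g := by
    intro t x y
    rw [hFapply, hFapply, hFapply, hΦ_lie]
  have hFmemIso : ∀ t : ℝ, F t ∈ isometrySubgroup fun x y : ↥g => B (x : L) (y : L) := by
    intro t x y
    show B ((F t x : ↥g) : L) ((F t y : ↥g) : L) = B (x : L) (y : L)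
    rw [hFapply, hFapply, hΦ_B]
  have pathArg : ∀ S : Subgroup (↥g ≃ₗ[ℝ] ↥g), (∀ t, F t ∈ S) →
      MemIdentityComponent ↥g S (F 1) := by
    intro S hmem
    refine ⟨hmem 1, ?_⟩
    letI := autTopology ↥g
    set fB := Module.finBasis ℝ ↥g with hfB
    set P : ℝ → S := fun t => ⟨F t, hmem t⟩ with hP
    have hcont : Continuous P := by
      apply Continuous.subtype_mk
      apply continuous_induced_rng.2
      apply continuous_pi
      intro i
      apply continuous_pi
      intro j
      have hentry : ∀ t : ℝ, fB.repr (F t (fB j)) i =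
          ∑ k, Real.exp (Real.log (lam k) * (-(t / 2))) *
            (b.repr (fB j) k * fB.repr (b k) i) := by
        intro t
        rw [hFapply]
        show fB.repr (phiMap b lam (-(t / 2)) (fB j)) i = _
        rw [phiMap_apply, map_sum, Finsupp.finset_sum_apply]
        refine Finset.sum_congr rfl fun k _ => ?_
        rw [map_smul, Finsupp.smul_apply, smul_eq_mul,
          Real.rpow_def_of_pos (hlam k)]
        ring
      show Continuous fun t : ℝ => fB.repr (F t (fB j)) i
      have hc : Continuous fun t : ℝ => ∑ k, Real.exp (Real.log (lam k) * (-(t / 2))) *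
          (b.repr (fB j) k * fB.repr (b k) i) := by
        apply continuous_finset_sum
        intro k _
        fun_prop
      exact hc.congr fun t => (hentry t).symm
    have h0 : P 0 = 1 := by
      apply Subtype.ext
      apply LinearEquiv.ext
      intro v
      show Φ (-(0 / 2)) v = v
      have he : (-(0 / 2) : ℝ) = 0 := by norm_num
      rw [he]
      exact hΦ_zero v
    have hrange : Set.range P ⊆ connectedComponent (1 : S) := by
      apply IsPreconnected.subset_connectedComponent
      · have := (isPreconnected_univ (α := ℝ)).image P hcont.continuousOn
        rwa [Set.image_univ] at this
      · exact ⟨0, h0⟩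
    exact hrange ⟨1, rfl⟩
  refine ⟨F 1, ?_, ?_, ?_, ?_, ?_⟩
  · exact hFmemLie 1
  · exact hFmemIso 1
  · exact pathArg _ hFmemLie
  · exact pathArg _ hFmemIso
  · intro x
    have h1 : (F 1) (θ₁ ((F 1).symm x)) = Φ (-(1 / 2)) (θ₁ (Φ (1 / 2) x)) := rfl
    rw [h1]
    have h2 := LinearMap.congr_fun (hΦθ (-(1 / 2))) (Φ (1 / 2) x)
    rw [LinearMap.comp_apply, LinearMap.comp_apply, neg_neg] at h2
    rw [h2, hΦ_add]
    have he : (1 / 2 + 1 / 2 : ℝ) = 1 := by norm_num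
    rw [he, hΦ_one, hTapp, h1i]
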